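/- Let m ≥ 2 and 0 < β < 1, and suppose δ ∈ (0,1) satisfies δ^{m-1} - δ^m > β. Then the polynomial f(x) = x^m - x^{m-1} - β has exactly m-1 roots (counted with multiplicity) in the open disk |x| < δ, and exactly one root with |x| ≥ δ; moreover that root is real. -/

import Mathlib

open Polynomial

attribute [local instance] Classical.propDecidable

lemma phi_anti (n : ℕ) : StrictAntiOn (fun t : ℝ => t * (1-t)^(n+1)) (Set.Icc (1/(n+2) : ℝ) 1) := by
  have hconv : Convex ℝ (Set.Icc (1/(n+2) : ℝ) 1) := convex_Icc _ _
  apply strictAntiOn_of_deriv_neg hconv (by fun_prop)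
  intro t ht
  rw [interior_Icc] at ht
  have hd : HasDerivAt (fun t : ℝ => t * (1-t)^(n+1))
      (1 * (1-t)^(n+1) + t * (((n:ℝ)+1) * (1-t)^n * (-1))) t := by
    have := (hasDerivAt_id t).mul (((hasDerivAt_id t).const_sub 1).pow (n+1))
    refine this.congr_deriv ?_
    simp only [id, Pi.pow_apply, Nat.add_sub_cancel, Nat.cast_add, Nat.cast_one]
  rw [hd.deriv]
  have h1 : (0:ℝ) < 1 - t := by linarith [ht.2]
  have h2 : (1:ℝ)/(n+2) < t := ht.1
  have h3 : (0:ℝ) < (n:ℝ) + 2 := by positivity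
  have h4 : 1 < ((n:ℝ)+2) * t := by
    rw [div_lt_iff₀ h3] at h2; linarith
  have h5 : (0:ℝ) < (1-t)^n := pow_pos h1 n
  have : 1 * (1-t)^(n+1) + t * (((n:ℝ)+1) * (1-t)^n * (-1))
      = (1-t)^n * (1 - ((n:ℝ)+2)*t) := by ring
  rw [this]
  exact mul_neg_of_pos_of_neg h5 (by linarith)


lemma loc (n : ℕ) (β δ : ℝ) (hβ : 0 < β) (hδ0 : 0 < δ) (hδ1 : δ < 1)
    (hδβ : β < δ^(n+1) - δ^(n+2)) (z : ℂ)
    (hz : z^(n+2) - z^(n+1) - (β:ℂ) = 0) (hzδ : δ ≤ ‖z‖) :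
    ‖z - 1‖ < 1/(n+2) := by
  set t := ‖z - 1‖ with ht
  have habs : ‖z‖ ^ (n+1) * t = β := by
    have h1 : z^(n+1) * (z - 1) = (β:ℂ) := by linear_combination hz
    have := congrArg norm h1
    rwa [norm_mul, norm_pow, Complex.norm_real, Real.norm_eq_abs, abs_of_pos hβ] at this
  have ht0 : 0 ≤ t := norm_nonneg _
  have hδn : (0:ℝ) < δ^(n+1) := pow_pos hδ0 _
  have hβδ : β < δ^(n+1) * (1 - δ) := by
    have h : δ^(n+1) * (1-δ) = δ^(n+1) - δ^(n+2) := by rw [pow_succ]; ring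
    linarith
  -- t < 1 - δ
  have htlt : t < 1 - δ := by
    have h2 : δ^(n+1) * t ≤ ‖z‖ ^ (n+1) * t :=
      mul_le_mul_of_nonneg_right (pow_le_pow_left₀ (le_of_lt hδ0) hzδ _) ht0
    have : δ^(n+1) * t < δ^(n+1) * (1-δ) := by linarith
    exact lt_of_mul_lt_mul_left this (le_of_lt hδn)
  -- |z| ≥ 1 - t
  have hz1 : 1 - t ≤ ‖z‖ := by
    have h := norm_sub_norm_le (1:ℂ) z
    have e1 : ‖(1:ℂ) - z‖ = t := by rw [ht, norm_sub_rev]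
    have e2 : ‖(1:ℂ)‖ = 1 := by simp
    rw [e1, e2] at h
    linarith
  -- φ(t) ≤ β
  have hφ : t * (1-t)^(n+1) ≤ β := by
    have h1t : (0:ℝ) ≤ 1 - t := by linarith
    calc t * (1-t)^(n+1) ≤ t * ‖z‖ ^(n+1) :=
          mul_le_mul_of_nonneg_left (pow_le_pow_left₀ h1t hz1 _) ht0
      _ = β := by rw [mul_comm]; exact habs
  by_contra hcon
  push_neg at hcon
  have hmem1 : t ∈ Set.Icc (1/(n+2):ℝ) 1 := ⟨hcon, by linarith⟩
  have hmem2 : (1-δ) ∈ Set.Icc (1/(n+2):ℝ) 1 := ⟨le_trans hcon (le_of_lt htlt), by linarith⟩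
  have := phi_anti n hmem1 hmem2 htlt
  simp only at this
  have hval : (1-δ) * (1 - (1-δ))^(n+1) = δ^(n+1) * (1-δ) := by ring
  rw [hval] at this
  linarith


lemma pow_polar (ρ θ : ℝ) (k : ℕ) :
    ((ρ:ℂ) * Complex.exp (θ * Complex.I))^k = ((ρ^k : ℝ):ℂ) * Complex.exp (((k*θ : ℝ):ℂ) * Complex.I) := by
  have h : (k:ℂ) * ((θ:ℂ) * Complex.I) = ((k*θ:ℝ):ℂ) * Complex.I := by push_cast; ring
  rw [mul_pow, ← Complex.exp_nat_mul, h]; norm_cast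

lemma pow_polar_im (ρ θ : ℝ) (k : ℕ) :
    (((ρ:ℂ) * Complex.exp (θ * Complex.I))^k).im = ρ^k * Real.sin (k*θ) := by
  rw [pow_polar]
  simp only [Complex.mul_im, Complex.ofReal_re, Complex.ofReal_im,
    Complex.exp_ofReal_mul_I_im, Complex.exp_ofReal_mul_I_re]
  ring

lemma pow_polar_re (ρ θ : ℝ) (k : ℕ) :
    (((ρ:ℂ) * Complex.exp (θ * Complex.I))^k).re = ρ^k * Real.cos (k*θ) := by
  rw [pow_polar]
  simp only [Complex.mul_re, Complex.ofReal_re, Complex.ofReal_im,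
    Complex.exp_ofReal_mul_I_im, Complex.exp_ofReal_mul_I_re]
  ring

lemma no_nonreal (n : ℕ) (β δ : ℝ) (hβ : 0 < β) (hδ0 : 0 < δ) (hδ1 : δ < 1)
    (hδβ : β < δ^(n+1) - δ^(n+2)) (w : ℂ)
    (hz : w^(n+2) - w^(n+1) - (β:ℂ) = 0) (hzδ : δ ≤ ‖w‖)
    (him : 0 < w.im) : False := by
  have hloc : ‖w - 1‖ < 1/((n:ℝ)+2) := by
    have := loc n β δ hβ hδ0 hδ1 hδβ w hz hzδ
    push_cast at this ⊢; exact this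
  set ρ := ‖w‖ with hρdef
  set θ := Complex.arg w with hθdef
  have hw0 : w ≠ 0 := by intro h; rw [h] at him; simp at him
  have hρ : 0 < ρ := norm_pos_iff.mpr hw0
  have hn2 : (0:ℝ) < (n:ℝ)+2 := by positivity
  have hre1 : ((n:ℝ)+1)/((n:ℝ)+2) < w.re := by
    have h3 : |(w-1).re| < 1/((n:ℝ)+2) := lt_of_le_of_lt (Complex.abs_re_le_norm _) hloc
    have h4 := (abs_lt.mp h3).1
    have h5 : (w-1).re = w.re - 1 := by simp
    have he : ((n:ℝ)+1)/((n:ℝ)+2) = 1 - 1/((n:ℝ)+2) := by field_simp; ring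
    rw [he]; rw [h5] at h4; linarith
  have himlt : w.im < 1/((n:ℝ)+2) := by
    have h3 : |(w-1).im| < 1/((n:ℝ)+2) := lt_of_le_of_lt (Complex.abs_im_le_norm _) hloc
    have h5 : (w-1).im = w.im := by simp
    rw [h5] at h3
    exact lt_of_le_of_lt (le_abs_self _) h3
  have hreρ : w.re ≤ ρ := Complex.re_le_norm w
  have hρ1 : ((n:ℝ)+1)/((n:ℝ)+2) < ρ := lt_of_lt_of_le hre1 hreρ
  -- θ in (0, π/2)
  have hsin : Real.sin θ = w.im / ρ := Complex.sin_arg w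
  have hcos : Real.cos θ = w.re / ρ := Complex.cos_arg hw0
  have hsinpos : 0 < Real.sin θ := by rw [hsin]; positivity
  have hcospos : 0 < Real.cos θ := by
    rw [hcos]; apply div_pos _ hρ
    calc (0:ℝ) < ((n:ℝ)+1)/((n:ℝ)+2) := by positivity
      _ < w.re := hre1
  have hθpos : 0 < θ := by
    by_contra h
    push_neg at h
    have := Real.sin_nonpos_of_nonpos_of_neg_pi_le h (le_of_lt (Complex.neg_pi_lt_arg w))
    linarith
  have hθhalf : θ < Real.pi / 2 := by
    by_contra h
    push_neg at h
    have := Real.cos_nonpos_of_pi_div_two_le_of_le h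
      (le_trans (Complex.arg_le_pi w) (by nlinarith [Real.pi_pos]))
    linarith
  -- sin θ < 1/(n+1)
  have hsinlt : Real.sin θ < 1/((n:ℝ)+1) := by
    have h6 : Real.sin θ * ρ = w.im := by rw [hsin]; field_simp
    have h8 : Real.sin θ * (((n:ℝ)+1)/((n:ℝ)+2)) < Real.sin θ * ρ :=
      mul_lt_mul_of_pos_left hρ1 hsinpos
    rw [h6] at h8
    have h10 : Real.sin θ * (((n:ℝ)+1)/((n:ℝ)+2)) < 1/((n:ℝ)+2) := lt_trans h8 himlt
    have h11 := mul_lt_mul_of_pos_right h10 hn2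
    have e1 : Real.sin θ*(((n:ℝ)+1)/((n:ℝ)+2))*((n:ℝ)+2) = Real.sin θ*((n:ℝ)+1) := by
      field_simp
    have e2 : (1/((n:ℝ)+2))*((n:ℝ)+2) = 1 := by field_simp
    rw [e1, e2] at h11
    rw [lt_div_iff₀ (by positivity : (0:ℝ) < (n:ℝ)+1)]
    exact h11
  -- θ < π/(n+2)
  have hjordan := Real.mul_le_sin (le_of_lt hθpos) (le_of_lt hθhalf)
  have hπ := Real.pi_pos
  have hθlt : ((n:ℝ)+2) * θ < Real.pi := by
    have h7 : θ ≤ Real.pi/2 * Real.sin θ := by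
      have h7a := mul_le_mul_of_nonneg_left hjordan (le_of_lt (half_pos hπ))
      have e : Real.pi/2 * (2/Real.pi * θ) = θ := by field_simp
      rw [e] at h7a; exact h7a
    have h8 : θ < Real.pi/2 * (1/((n:ℝ)+1)) :=
      lt_of_le_of_lt h7 (mul_lt_mul_of_pos_left hsinlt (by positivity))
    have e : ((n:ℝ)+2) * (Real.pi/2 * (1/((n:ℝ)+1))) = Real.pi * (((n:ℝ)+2)/(2*((n:ℝ)+1))) := by
      field_simp
    have hle : ((n:ℝ)+2)/(2*((n:ℝ)+1)) ≤ 1 := by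
      rw [div_le_one (by positivity)]; linarith
    calc ((n:ℝ)+2) * θ < ((n:ℝ)+2) * (Real.pi/2 * (1/((n:ℝ)+1))) :=
        mul_lt_mul_of_pos_left h8 (by positivity)
      _ = Real.pi * (((n:ℝ)+2)/(2*((n:ℝ)+1))) := e
      _ ≤ Real.pi * 1 := mul_le_mul_of_nonneg_left hle (le_of_lt hπ)
      _ = Real.pi := mul_one _
  -- the trig equations
  have hw : ((ρ:ℂ)) * Complex.exp ((θ:ℂ) * Complex.I) = w := Complex.norm_mul_exp_arg_mul_I w
  have hz2 : w^(n+2) - w^(n+1) = (β:ℂ) := by linear_combination hz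
  have hzim := congrArg Complex.im hz2
  have hzre := congrArg Complex.re hz2
  rw [← hw] at hzim hzre
  simp only [Complex.sub_im, Complex.sub_re, pow_polar_im, pow_polar_re,
    Complex.ofReal_im, Complex.ofReal_re] at hzim hzre
  push_cast at hzim hzre
  -- hzim : ρ^(n+2) * sin((n+2)θ) - ρ^(n+1) * sin((n+1)θ) = 0
  -- hzre : ρ^(n+2) * cos((n+2)θ) - ρ^(n+1) * cos((n+1)θ) = β
  have hsub : Real.sin (((n:ℝ)+1)*θ) * Real.cos (((n:ℝ)+2)*θ)
      - Real.cos (((n:ℝ)+1)*θ) * Real.sin (((n:ℝ)+2)*θ) = - Real.sin θ := by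
    rw [← Real.sin_sub]
    have e : ((n:ℝ)+1)*θ - ((n:ℝ)+2)*θ = -θ := by ring
    rw [e, Real.sin_neg]
  have hSpos : 0 < Real.sin (((n:ℝ)+2)*θ) :=
    Real.sin_pos_of_pos_of_lt_pi (by positivity) hθlt
  have hkey : β * Real.sin (((n:ℝ)+2)*θ) = -(ρ^(n+1) * Real.sin θ) := by
    linear_combination (-(Real.sin (((n:ℝ)+2)*θ))) * hzre
      + (Real.cos (((n:ℝ)+2)*θ)) * hzim + (ρ^(n+1)) * hsub
  nlinarith [mul_pos hβ hSpos, mul_pos (pow_pos hρ (n+1)) hsinpos]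


lemma real_mono (n : ℕ) : StrictMonoOn (fun x : ℝ => x^(n+2) - x^(n+1)) (Set.Ici (((n:ℝ)+1)/((n:ℝ)+2))) := by
  apply strictMonoOn_of_deriv_pos (convex_Ici _) (by fun_prop)
  intro x hx
  rw [interior_Ici] at hx
  have hd : HasDerivAt (fun x : ℝ => x^(n+2) - x^(n+1))
      (((n:ℝ)+2) * x^(n+1) - ((n:ℝ)+1) * x^n) x := by
    have := (hasDerivAt_pow (n+2) x).sub (hasDerivAt_pow (n+1) x)
    refine this.congr_deriv ?_
    simp only [Nat.cast_add, Nat.cast_ofNat, Nat.cast_one, Nat.add_sub_cancel, show n+2-1 = n+1 from rfl]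
  rw [hd.deriv]
  have hc : (0:ℝ) < ((n:ℝ)+1)/((n:ℝ)+2) := by positivity
  have hx0 : 0 < x := lt_trans hc hx
  have h1 : ((n:ℝ)+1) < ((n:ℝ)+2) * x := by
    have := (div_lt_iff₀ (by positivity : (0:ℝ) < (n:ℝ)+2)).mp hx
    linarith
  have h2 : (0:ℝ) < x^n := pow_pos hx0 n
  have : ((n:ℝ)+2) * x^(n+1) - ((n:ℝ)+1) * x^n = x^n * (((n:ℝ)+2)*x - ((n:ℝ)+1)) := by ring
  rw [this]
  exact mul_pos h2 (by linarith)


/-- Rouché-type root location: if `m ≥ 2`, `0 < β < 1`, and `δ ∈ (0,1)` satisfies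
`δ^{m-1} - δ^m > β`, then `f(x) = x^m - x^{m-1} - β` has exactly `m-1` roots (with
multiplicity) in the open disk `|x| < δ`, exactly one root with `|x| ≥ δ`, and that
root is real. -/
theorem rouche_root_location (m : ℕ) (hm : 2 ≤ m) (β δ : ℝ)
    (hβ : 0 < β) (hβ1 : β < 1) (hδ0 : 0 < δ) (hδ1 : δ < 1)
    (hδβ : β < δ ^ (m - 1) - δ ^ m)
    (f : Polynomial ℂ) (hf : f = X ^ m - X ^ (m - 1) - C (β : ℂ)) :
    Multiset.card (f.roots.filter (fun z => ‖z‖ < δ)) = m - 1 ∧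
    Multiset.card (f.roots.filter (fun z => δ ≤ ‖z‖)) = 1 ∧
    ∀ z ∈ f.roots, δ ≤ ‖z‖ → z.im = 0 := by
  obtain ⟨n, rfl⟩ : ∃ n, m = n + 2 := ⟨m - 2, by omega⟩
  have hm1 : n + 2 - 1 = n + 1 := by omega
  rw [hm1] at hδβ hf
  -- roots as equation solutions
  have hroot_eq : ∀ z : ℂ, f.IsRoot z ↔ z^(n+2) - z^(n+1) - (β:ℂ) = 0 := by
    intro z
    rw [hf]
    simp [IsRoot, eval_sub, eval_pow]
  -- degree and nonzero
  have hdeg : f.natDegree = n + 2 := by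
    rw [hf]
    compute_degree!
  have hf0 : f ≠ 0 := by
    intro h
    rw [h] at hdeg
    simp at hdeg
  -- card roots
  have hcard : Multiset.card f.roots = n + 2 := by
    rw [← hdeg]
    exact (Polynomial.splits_iff_card_roots).mp (IsAlgClosed.splits f)
  -- the real root r
  have hIVT : ∃ r ∈ Set.Ioo (1:ℝ) 2, r^(n+2) - r^(n+1) - β = 0 := by
    have hcont : ContinuousOn (fun x : ℝ => x^(n+2) - x^(n+1) - β) (Set.Icc 1 2) := by
      fun_prop
    have h2 : (2:ℝ) ≤ 2^(n+1) := by
      calc (2:ℝ) = 2^1 := (pow_one 2).symm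
        _ ≤ 2^(n+1) := pow_le_pow_right₀ (by norm_num) (by omega)
    have hmem : (0:ℝ) ∈ Set.Ioo ((fun x : ℝ => x^(n+2) - x^(n+1) - β) 1)
        ((fun x : ℝ => x^(n+2) - x^(n+1) - β) 2) := by
      constructor
      · simp only; rw [one_pow, one_pow]; linarith
      · simp only
        have : (2:ℝ)^(n+2) = 2 * 2^(n+1) := by ring
        rw [this]; linarith
    obtain ⟨r, hr, hr0⟩ := intermediate_value_Ioo (by norm_num : (1:ℝ) ≤ 2) hcont hmem
    exact ⟨r, hr, hr0⟩
  obtain ⟨r, hrIoo, hr0⟩ := hIVT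
  have hr1 : 1 < r := hrIoo.1
  have hrC : ((r:ℂ))^(n+2) - ((r:ℂ))^(n+1) - (β:ℂ) = 0 := by
    have : ((r^(n+2) - r^(n+1) - β : ℝ) : ℂ) = 0 := by rw [hr0]; simp
    push_cast at this
    exact this
  have hrroot : (r:ℂ) ∈ f.roots := by
    rw [mem_roots hf0]
    exact (hroot_eq _).mpr hrC
  have habsr : ‖(r:ℂ)‖ = r := by
    rw [Complex.norm_real, Real.norm_eq_abs, abs_of_pos (by linarith)]
  have hδr : δ ≤ ‖(r:ℂ)‖ := by rw [habsr]; linarith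
  -- every root with δ ≤ |z| is real and equals r
  have him0 : ∀ z ∈ f.roots, δ ≤ ‖z‖ → z.im = 0 := by
    intro z hz hδz
    have hzeq := (hroot_eq z).mp ((mem_roots hf0).mp hz)
    by_contra him
    rcases lt_or_gt_of_ne him with hlt | hgt
    · -- im < 0 : use conjugate
      have hconj : (starRingEnd ℂ z)^(n+2) - (starRingEnd ℂ z)^(n+1) - (β:ℂ) = 0 := by
        have := congrArg (starRingEnd ℂ) hzeq
        simpa [map_sub, map_pow, Complex.conj_ofReal] using this
      exact no_nonreal n β δ hβ hδ0 hδ1 hδβ _ hconj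
        (by rwa [Complex.norm_conj]) (by simpa using hlt)
    · exact no_nonreal n β δ hβ hδ0 hδ1 hδβ z hzeq hδz hgt
  have huniq : ∀ z ∈ f.roots, δ ≤ ‖z‖ → z = (r:ℂ) := by
    intro z hz hδz
    have hzim := him0 z hz hδz
    have hzeq := (hroot_eq z).mp ((mem_roots hf0).mp hz)
    have hzre : z = ((z.re : ℝ) : ℂ) := Complex.ext rfl (by simp [hzim])
    set x := z.re with hx
    have hxeq : x^(n+2) - x^(n+1) - β = 0 := by
      have : ((x^(n+2) - x^(n+1) - β : ℝ) : ℂ) = 0 := by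
        push_cast
        rw [← hzre]
        exact hzeq
      exact_mod_cast this
    -- x > (n+1)/(n+2) via loc
    have hlocz := loc n β δ hβ hδ0 hδ1 hδβ z hzeq hδz
    have hxgt : ((n:ℝ)+1)/((n:ℝ)+2) < x := by
      have h1 : ‖z - 1‖ = |x - 1| := by
        rw [hzre]
        rw [← Complex.ofReal_one, ← Complex.ofReal_sub, Complex.norm_real, Real.norm_eq_abs]
      rw [h1] at hlocz
      have h2 := (abs_lt.mp hlocz).1
      have he : ((n:ℝ)+1)/((n:ℝ)+2) = 1 - 1/((n:ℝ)+2) := by field_simp; ring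
      have h3 : (1:ℝ)/((n:ℝ)+2) = 1/(((n:ℕ):ℝ)+2) := by norm_num
      rw [he]
      push_cast at h2 ⊢
      linarith
    have hrgt : ((n:ℝ)+1)/((n:ℝ)+2) < r := by
      have : ((n:ℝ)+1)/((n:ℝ)+2) < 1 := by
        rw [div_lt_one (by positivity)]; linarith
      linarith
    have := (real_mono n).injOn (Set.mem_Ici.mpr (le_of_lt hxgt))
      (Set.mem_Ici.mpr (le_of_lt hrgt))
      (by show x^(n+2)-x^(n+1) = r^(n+2)-r^(n+1); linarith)
    rw [hzre, this]
  -- multiplicity of r is 1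
  have hmult : f.roots.count (r:ℂ) = 1 := by
    rw [Polynomial.count_roots]
    have hpos : 0 < f.rootMultiplicity (r:ℂ) :=
      (Polynomial.rootMultiplicity_pos hf0).mpr ((hroot_eq _).mpr hrC)
    by_contra hne
    have h2 : 1 < f.rootMultiplicity (r:ℂ) := by omega
    have hder := Polynomial.isRoot_iterate_derivative_of_lt_rootMultiplicity h2
    rw [Function.iterate_one] at hder
    have hdeval : f.derivative.eval (r:ℂ) =
        ((n:ℂ)+2) * (r:ℂ)^(n+1) - ((n:ℂ)+1) * (r:ℂ)^n := by
      rw [hf]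
      simp [derivative_sub, derivative_X_pow]
      left; ring
    rw [IsRoot, hdeval] at hder
    have : ((((n:ℝ)+2) * r^(n+1) - ((n:ℝ)+1) * r^n : ℝ) : ℂ) = 0 := by
      push_cast
      exact hder
    have hreal : ((n:ℝ)+2) * r^(n+1) - ((n:ℝ)+1) * r^n = 0 := by exact_mod_cast this
    have hrn : (0:ℝ) < r^n := pow_pos (by linarith) n
    have hstep : ((n:ℝ)+2)*r^(n+1) - ((n:ℝ)+1)*r^n = r^n * (((n:ℝ)+2)*r - ((n:ℝ)+1)) := by
      rw [pow_succ]; ring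
    have : (0:ℝ) < r^n * (((n:ℝ)+2)*r - ((n:ℝ)+1)) := mul_pos hrn (by nlinarith)
    linarith
  -- the filter at δ ≤ |z| is {r}
  have hfilt : Multiset.card (f.roots.filter (fun z => δ ≤ ‖z‖)) = 1 := by
    set s := f.roots.filter (fun z => δ ≤ ‖z‖) with hs
    have hall : ∀ z ∈ s, z = (r:ℂ) := by
      intro z hzs
      obtain ⟨hz1, hz2⟩ := Multiset.mem_filter.mp hzs
      exact huniq z hz1 hz2
    have hrep : s = Multiset.replicate (Multiset.card s) (r:ℂ) :=
      Multiset.eq_replicate_card.mpr hall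
    have hcount : s.count (r:ℂ) = Multiset.card s := by
      rw [hrep]; simp
    have hcount2 : s.count (r:ℂ) = f.roots.count (r:ℂ) := by
      rw [hs]
      exact Multiset.count_filter_of_pos hδr
    omega
  refine ⟨?_, hfilt, him0⟩
  have hsplit := Multiset.filter_add_not (fun z => ‖z‖ < δ) f.roots
  have hcongr : f.roots.filter (fun z => ¬ ‖z‖ < δ)
      = f.roots.filter (fun z => δ ≤ ‖z‖) :=
    Multiset.filter_congr (fun z _ => by rw [not_lt])
  have := congrArg Multiset.card hsplit
  rw [Multiset.card_add, hcongr, hfilt, hcard] at this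
  omega
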